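/- For all natural numbers p, q, n, the sum over k from 0 to n of C(p+k, p)·C(q+n-k, q)·H_{p+k}·H_{q+n-k} equals C(p+q+n+1, n)·[(H^{(2)}_{p+q+1} - H^{(2)}_{p+q+n+1}) + (H_p - H_{p+q+1} + H_{p+q+n+1})·(H_q - H_{p+q+1} + H_{p+q+n+1})]. -/

import Mathlib

open Finset BigOperators

def H (n : ℕ) : ℚ := ∑ i ∈ Finset.range n, 1 / (i + 1 : ℚ)

def H2 (n : ℕ) : ℚ := ∑ i ∈ Finset.range n, 1 / ((i + 1 : ℚ))^2

def A (p k : ℕ) : ℚ := ((p + k).choose p : ℚ)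

lemma A_rel (p k : ℕ) : ((k:ℚ)+1) * A p (k+1) = ((p:ℚ)+(k:ℚ)+1) * A p k := by
  have h := Nat.add_one_mul_choose_eq (p+k) k
  have h1 : (p+k).choose k = (p+k).choose p := by
    have := Nat.choose_symm (Nat.le_add_left k p)
    simpa using this.symm
  have h2 : (p+k+1).choose (k+1) = (p+k+1).choose p := by
    have := Nat.choose_symm (n := p+k+1) (k := k+1) (by omega)
    simpa [show p+k+1-(k+1) = p by omega] using this.symm
  rw [h1, h2] at h
  have := congrArg (fun x : ℕ => (x : ℚ)) h
  push_cast at this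
  unfold A
  push_cast [show p + (k+1) = p + k + 1 by omega]
  linarith

lemma A_zero (p : ℕ) : A p 0 = 1 := by simp [A]

lemma H_succ (m : ℕ) : H (m+1) = H m + 1/((m:ℚ)+1) := by
  simp [H, Finset.sum_range_succ]

lemma H2_succ (m : ℕ) : H2 (m+1) = H2 m + 1/((m:ℚ)+1)^2 := by
  simp [H2, Finset.sum_range_succ]

def S0 (p q n : ℕ) : ℚ := ∑ k ∈ Finset.range (n+1), A p k * A q (n-k)
def S1 (p q n : ℕ) : ℚ := ∑ k ∈ Finset.range (n+1), A p k * A q (n-k) * H (p+k)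
def S1b (p q n : ℕ) : ℚ := ∑ k ∈ Finset.range (n+1), A p k * A q (n-k) * H (q+(n-k))
def S2 (p q n : ℕ) : ℚ := ∑ k ∈ Finset.range (n+1),
    A p k * A q (n-k) * H (p+k) * H (q+(n-k))

lemma S1b_eq (p q n : ℕ) : S1b p q n = S1 q p n := by
  unfold S1b S1
  rw [← Finset.sum_range_reflect]
  apply Finset.sum_congr rfl
  intro j hj
  have hj' : j ≤ n := by simpa [Nat.lt_succ_iff] using hj
  have h1 : n + 1 - 1 - j = n - j := by omega
  have h2 : n - (n - j) = j := by omega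
  rw [h1, h2]
  ring

lemma rec0 (p q n : ℕ) :
    ((n:ℚ)+1) * S0 p q (n+1) = ((p:ℚ)+q+n+2) * S0 p q n := by
  set G : ℕ → ℚ := fun k => (k:ℚ) * A p k * A q (n+1-k) with hG
  have tele : ∑ k ∈ Finset.range (n+1), (G (k+1) - G k) = G (n+1) - G 0 :=
    Finset.sum_range_sub G (n+1)
  have key : ∀ k ∈ Finset.range (n+1),
      ((n:ℚ)+1) * (A p k * A q (n+1-k)) + (G (k+1) - G k)
        = ((p:ℚ)+q+n+2) * (A p k * A q (n-k)) := by
    intro k hk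
    have hk' : k ≤ n := by simpa [Nat.lt_succ_iff] using hk
    obtain ⟨m, hm⟩ : ∃ m, n = k + m := ⟨n - k, by omega⟩
    subst hm
    have e1 : k + m - k = m := by omega
    have e2 : k + m + 1 - k = m + 1 := by omega
    have e3 : k + m + 1 - (k+1) = m := by omega
    rw [hG]
    simp only [e1, e2, e3]
    have h1 := A_rel p k
    have h2 := A_rel q m
    push_cast
    linear_combination A q m * h1 + A p k * h2
  unfold S0
  rw [Finset.sum_range_succ, mul_add, Finset.mul_sum]
  have : ∑ k ∈ Finset.range (n+1), ((n:ℚ)+1) * (A p k * A q (n+1-k))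
      = ∑ k ∈ Finset.range (n+1), (((p:ℚ)+q+n+2) * (A p k * A q (n-k)) - (G (k+1) - G k)) := by
    apply Finset.sum_congr rfl
    intro k hk
    have := key k hk
    linarith
  rw [this, Finset.sum_sub_distrib, tele]
  have hGn : G (n+1) = ((n:ℚ)+1) * A p (n+1) * A q 0 := by
    simp [hG]
  have hG0 : G 0 = 0 := by simp [hG]
  rw [hGn, hG0, Finset.mul_sum]
  simp [Nat.sub_self]
  ring

lemma H_rel (m : ℕ) : ((m:ℚ)+1) * H (m+1) = ((m:ℚ)+1) * H m + 1 := by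
  rw [H_succ]
  have : ((m:ℚ)+1) ≠ 0 := by positivity
  field_simp

lemma rec1 (p q n : ℕ) :
    ((n:ℚ)+1) * S1 p q (n+1) = ((p:ℚ)+q+n+2) * S1 p q n + S0 p q n := by
  set G : ℕ → ℚ := fun k => (k:ℚ) * A p k * A q (n+1-k) * H (p+k) with hG
  have tele : ∑ k ∈ Finset.range (n+1), (G (k+1) - G k) = G (n+1) - G 0 :=
    Finset.sum_range_sub G (n+1)
  have key : ∀ k ∈ Finset.range (n+1),
      ((n:ℚ)+1) * (A p k * A q (n+1-k) * H (p+k)) + (G (k+1) - G k)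
        = ((p:ℚ)+q+n+2) * (A p k * A q (n-k) * H (p+k)) + A p k * A q (n-k) := by
    intro k hk
    have hk' : k ≤ n := by simpa [Nat.lt_succ_iff] using hk
    obtain ⟨m, hm⟩ : ∃ m, n = k + m := ⟨n - k, by omega⟩
    subst hm
    have e1 : k + m - k = m := by omega
    have e2 : k + m + 1 - k = m + 1 := by omega
    have e3 : k + m + 1 - (k+1) = m := by omega
    rw [hG]
    simp only [e1, e2, e3]
    have h1 := A_rel p k
    have h2 := A_rel q m
    have hH' : ((p:ℚ)+k+1) * H (p+(k+1)) = ((p:ℚ)+k+1) * H (p+k) + 1 := by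
      have := H_rel (p+k)
      push_cast at this
      exact this
    push_cast
    linear_combination (A p k * H (p+k)) * h2 + (A q m * H (p+(k+1))) * h1
      + (A p k * A q m) * hH'
  unfold S1
  rw [Finset.sum_range_succ, mul_add, Finset.mul_sum]
  have hsum : ∑ k ∈ Finset.range (n+1), ((n:ℚ)+1) * (A p k * A q (n+1-k) * H (p+k))
      = ∑ k ∈ Finset.range (n+1),
        (((p:ℚ)+q+n+2) * (A p k * A q (n-k) * H (p+k)) + A p k * A q (n-k) - (G (k+1) - G k)) := by
    apply Finset.sum_congr rfl
    intro k hk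
    have := key k hk
    linarith
  rw [hsum, Finset.sum_sub_distrib, tele, Finset.sum_add_distrib]
  have hGn : G (n+1) = ((n:ℚ)+1) * A p (n+1) * A q 0 * H (p+(n+1)) := by
    simp [hG]
  have hG0 : G 0 = 0 := by simp [hG]
  rw [hGn, hG0]
  unfold S0
  rw [Finset.mul_sum]
  simp [Nat.sub_self]
  ring

lemma rec2 (p q n : ℕ) :
    ((n:ℚ)+1) * S2 p q (n+1) = ((p:ℚ)+q+n+2) * S2 p q n + S1 p q n + S1b p q n := by
  set G : ℕ → ℚ := fun k => (k:ℚ) * A p k * A q (n+1-k) * H (p+k) * H (q+(n+1-k)) with hG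
  have tele : ∑ k ∈ Finset.range (n+1), (G (k+1) - G k) = G (n+1) - G 0 :=
    Finset.sum_range_sub G (n+1)
  have key : ∀ k ∈ Finset.range (n+1),
      ((n:ℚ)+1) * (A p k * A q (n+1-k) * H (p+k) * H (q+(n+1-k))) + (G (k+1) - G k)
        = ((p:ℚ)+q+n+2) * (A p k * A q (n-k) * H (p+k) * H (q+(n-k)))
          + A p k * A q (n-k) * H (p+k) + A p k * A q (n-k) * H (q+(n-k)) := by
    intro k hk
    have hk' : k ≤ n := by simpa [Nat.lt_succ_iff] using hk
    obtain ⟨m, hm⟩ : ∃ m, n = k + m := ⟨n - k, by omega⟩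
    subst hm
    have e1 : k + m - k = m := by omega
    have e2 : k + m + 1 - k = m + 1 := by omega
    have e3 : k + m + 1 - (k+1) = m := by omega
    rw [hG]
    simp only [e1, e2, e3]
    have h1 := A_rel p k
    have h2 := A_rel q m
    have hH' : ((p:ℚ)+k+1) * H (p+(k+1)) = ((p:ℚ)+k+1) * H (p+k) + 1 := by
      have := H_rel (p+k)
      push_cast at this
      exact this
    have hg' : ((q:ℚ)+m+1) * H (q+(m+1)) = ((q:ℚ)+m+1) * H (q+m) + 1 := by
      have := H_rel (q+m)
      push_cast at this
      exact this
    push_cast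
    linear_combination (A p k * H (p+k) * H (q+(m+1))) * h2
      + (A p k * A q m * H (p+k)) * hg'
      + (A q m * H (p+(k+1)) * H (q+m)) * h1
      + (A p k * A q m * H (q+m)) * hH'
  unfold S2
  rw [Finset.sum_range_succ, mul_add, Finset.mul_sum]
  have hsum : ∑ k ∈ Finset.range (n+1),
        ((n:ℚ)+1) * (A p k * A q (n+1-k) * H (p+k) * H (q+(n+1-k)))
      = ∑ k ∈ Finset.range (n+1),
        (((p:ℚ)+q+n+2) * (A p k * A q (n-k) * H (p+k) * H (q+(n-k)))
          + A p k * A q (n-k) * H (p+k) + A p k * A q (n-k) * H (q+(n-k))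
          - (G (k+1) - G k)) := by
    apply Finset.sum_congr rfl
    intro k hk
    have := key k hk
    linarith
  unfold S1 S1b
  rw [hsum, Finset.sum_sub_distrib, tele, Finset.sum_add_distrib, Finset.sum_add_distrib]
  have hGn : G (n+1) = ((n:ℚ)+1) * A p (n+1) * A q 0 * H (p+(n+1)) * H (q+0) := by
    simp [hG]
  have hG0 : G 0 = 0 := by simp [hG]
  rw [hGn, hG0, Finset.mul_sum]
  simp [Nat.sub_self]
  ring

lemma C0_rel (p q n : ℕ) :
    ((n:ℚ)+1) * ((p+q+n+2).choose (n+1) : ℚ)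
      = ((p:ℚ)+q+n+2) * ((p+q+n+1).choose n : ℚ) := by
  have h := Nat.add_one_mul_choose_eq (p+q+n+1) n
  rw [show p+q+n+1+1 = p+q+n+2 by omega] at h
  have := congrArg (fun x : ℕ => (x : ℚ)) h
  push_cast at this
  linarith

lemma nsucc_ne (n : ℕ) : ((n:ℚ)+1) ≠ 0 := by positivity

lemma S0closed (p q n : ℕ) : S0 p q n = ((p+q+n+1).choose n : ℚ) := by
  induction n with
  | zero => simp [S0, A]
  | succ n ih =>
    apply mul_left_cancel₀ (nsucc_ne n)
    rw [rec0, ih]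
    have e : p+q+(n+1)+1 = p+q+n+2 := by omega
    rw [e, C0_rel]

lemma S1closed (p q n : ℕ) :
    S1 p q n = ((p+q+n+1).choose n : ℚ) * (H p + H (p+q+n+1) - H (p+q+1)) := by
  induction n with
  | zero => simp [S1, A]
  | succ n ih =>
    apply mul_left_cancel₀ (nsucc_ne n)
    rw [rec1, ih, S0closed]
    have e : p+q+(n+1)+1 = p+q+n+2 := by omega
    rw [e, show ((n:ℚ)+1) * (((p+q+n+2).choose (n+1) : ℚ) * (H p + H (p+q+n+2) - H (p+q+1)))
        = (((n:ℚ)+1) * ((p+q+n+2).choose (n+1) : ℚ)) * (H p + H (p+q+n+2) - H (p+q+1)) by ring,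
      C0_rel]
    have hH := H_rel (p+q+n+1)
    push_cast at hH
    rw [show p+q+n+1+1 = p+q+n+2 by omega] at hH
    linear_combination (-(((p+q+n+1).choose n : ℚ))) * hH

lemma S2closed (p q n : ℕ) :
    S2 p q n = ((p+q+n+1).choose n : ℚ)
        * ((H2 (p+q+1) - H2 (p+q+n+1))
          + (H p - H (p+q+1) + H (p+q+n+1)) * (H q - H (p+q+1) + H (p+q+n+1))) := by
  induction n with
  | zero => simp [S2, A]
  | succ n ih =>
    have hs : ((p:ℚ)+q+n+2) ≠ 0 := by positivity
    apply mul_left_cancel₀ (nsucc_ne n)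
    apply mul_left_cancel₀ hs
    rw [rec2, S1b_eq, ih, S1closed, S1closed]
    rw [show p+q+(n+1)+1 = p+q+n+2 by omega, show q+p+n+1 = p+q+n+1 by omega,
      show q+p+1 = p+q+1 by omega]
    have hC := C0_rel p q n
    have hH := H_rel (p+q+n+1)
    push_cast at hH
    rw [show p+q+n+1+1 = p+q+n+2 by omega] at hH
    have hH2 : ((p:ℚ)+q+n+2)^2 * H2 (p+q+n+2) = ((p:ℚ)+q+n+2)^2 * H2 (p+q+n+1) + 1 := by
      have h := H2_succ (p+q+n+1)
      rw [show p+q+n+1+1 = p+q+n+2 by omega] at h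
      rw [h]
      push_cast
      field_simp
      ring
    set c : ℚ := ((p+q+n+1).choose n : ℚ) with hc
    set s : ℚ := ((p:ℚ)+q+n+2) with hsdef
    set Fnew : ℚ := H2 (p+q+1) - H2 (p+q+n+2)
      + (H p - H (p+q+1) + H (p+q+n+2)) * (H q - H (p+q+1) + H (p+q+n+2)) with hF
    set W : ℚ := H p + H q - 2 * H (p+q+1) + H (p+q+n+1) + H (p+q+n+2) with hW
    linear_combination (-(s * Fnew)) * hC + (-(s*c*W) - c) * hH + c * hH2

theorem stmt6 (p q n : ℕ) :
    ∑ k ∈ Finset.range (n + 1),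
        ((p + k).choose p : ℚ) * ((q + n - k).choose q : ℚ) * H (p + k) * H (q + n - k)
      = ((p + q + n + 1).choose n : ℚ)
          * ((H2 (p + q + 1) - H2 (p + q + n + 1))
            + (H p - H (p + q + 1) + H (p + q + n + 1))
              * (H q - H (p + q + 1) + H (p + q + n + 1))) := by
  have : ∑ k ∈ Finset.range (n + 1),
      ((p + k).choose p : ℚ) * ((q + n - k).choose q : ℚ) * H (p + k) * H (q + n - k)
      = S2 p q n := by
    unfold S2 A
    apply Finset.sum_congr rfl
    intro k hk
    have hk' : k ≤ n := by simpa [Nat.lt_succ_iff] using hk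
    rw [show q + n - k = q + (n - k) by omega]
  rw [this, S2closed]
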